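/- If C is measurable with λ(C) < ∞, ψ ∈ N, and Z_C(ψ) < ∞, then the point process ξ whose distribution is Z_C(ψ)^{-1}(1{0∈·} + ∑_{m≥1}(1/m!)∫_{C^m}1{∑δ_{x_j}∈·} κ_m(x_1,…,x_m,ψ) dλ^m) satisfies the GNZ equations with Papangelou intensity κ^{(C,ψ)}(x,μ) = κ(x,ψ+μ)1_C(x), and ξ is almost surely a finite counting measure supported in C. -/

import Mathlib

open MeasureTheory ENNReal

attribute [local instance] Classical.propDecidable

namespace Gibbs

variable {X : Type*} [MeasurableSpace X]

noncomputable def diracSum (l : List X) : Measure X :=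
  (l.map fun x => Measure.dirac x).sum

noncomputable def diracSumFin {m : ℕ} (v : Fin m → X) : Measure X :=
  ∑ i, Measure.dirac (v i)

noncomputable def kappaList (κ : X → Measure X → ℝ≥0∞) : List X → Measure X → ℝ≥0∞
  | [], _ => 1
  | x :: l, μ => κ x (μ + diracSum l) * kappaList κ l μ

noncomputable def kappaFin (κ : X → Measure X → ℝ≥0∞) {m : ℕ}
    (v : Fin m → X) (μ : Measure X) : ℝ≥0∞ :=
  kappaList κ (List.ofFn v) μ

def Cocycle (κ : X → Measure X → ℝ≥0∞) : Prop :=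
  ∀ (x y : X) (μ : Measure X),
    κ x μ * κ y (μ + Measure.dirac x) = κ y μ * κ x (μ + Measure.dirac y)

def IsLocalization (Bseq : ℕ → Set X) : Prop :=
  Monotone Bseq ∧ (∀ j, MeasurableSet (Bseq j)) ∧ (⋃ j, Bseq j) = Set.univ

def IsCounting (Bseq : ℕ → Set X) (μ : Measure X) : Prop :=
  ∀ j, ∃ n : ℕ, μ (Bseq j) = n

structure IsFactorial (fact : Measure X → (m : ℕ) → Measure (Fin m → X)) : Prop where
  one : ∀ μ : Measure X, fact μ 1 = Measure.map (fun x => (fun _ : Fin 1 => x)) μ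
  symm : ∀ (μ : Measure X) (m : ℕ) (σ : Equiv.Perm (Fin m)),
    Measure.map (fun v => v ∘ σ) (fact μ m) = fact μ m
  recur : ∀ (μ : Measure X) (m : ℕ) (A : Set (Fin (m + 1) → X)), MeasurableSet A →
    fact μ (m + 1) A =
      ∫⁻ v, (μ {x | Fin.snoc v x ∈ A}
        - ∑ j : Fin m, Set.indicator A (fun _ => (1 : ℝ≥0∞)) (Fin.snoc v (v j))) ∂ fact μ m

noncomputable def enat (c : ℝ≥0∞) : ℕ := ⌊c.toReal⌋₊

noncomputable def elog (c : ℝ≥0∞) : EReal :=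
  if c = 0 then ⊥ else if c = ⊤ then ⊤ else ((Real.log c.toReal : ℝ) : EReal)

noncomputable def eexp (x : EReal) : ℝ≥0∞ :=
  if x = ⊥ then 0 else if x = ⊤ then ⊤ else ENNReal.ofReal (Real.exp x.toReal)

noncomputable def hamiltonian (κ : X → Measure X → ℝ≥0∞)
    (fact : Measure X → (m : ℕ) → Measure (Fin m → X)) (μ ψ : Measure X) : EReal :=
  if μ Set.univ = 0 then 0
  else if μ Set.univ = ⊤ then ⊤
  else - elog ((((enat (μ Set.univ)).factorial : ℝ≥0∞))⁻¹ *
    ∫⁻ v : Fin (enat (μ Set.univ)) → X, kappaFin κ v ψ ∂ fact μ (enat (μ Set.univ)))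

noncomputable def partitionZ (κ : X → Measure X → ℝ≥0∞) (lam : Measure X)
    (B : Set X) (ψ : Measure X) : ℝ≥0∞ :=
  1 + ∑' m : ℕ, (((m + 1).factorial : ℝ≥0∞))⁻¹ *
    ∫⁻ v : Fin (m + 1) → X, kappaFin κ v ψ ∂(Measure.pi fun _ : Fin (m + 1) => lam.restrict B)

noncomputable def kernelRestrict (κ : X → Measure X → ℝ≥0∞) (C : Set X) (ψ : Measure X) :
    X → Measure X → ℝ≥0∞ :=
  fun x μ => κ x (ψ + μ) * Set.indicator C (fun _ => (1 : ℝ≥0∞)) x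

/-! ### Auxiliary lemmas -/

section Aux

set_option linter.unusedSectionVars false
set_option linter.unusedVariables false

lemma diracSum_perm {l l' : List X} (h : l.Perm l') : diracSum l = diracSum l' := by
  unfold diracSum
  exact List.Perm.sum_eq (h.map _)

lemma diracSum_ofFn {m : ℕ} (v : Fin m → X) : diracSum (List.ofFn v) = diracSumFin v := by
  unfold diracSum diracSumFin
  rw [List.map_ofFn, List.sum_ofFn]
  rfl

lemma kappaList_perm {κ : X → Measure X → ℝ≥0∞} (hcoc : Cocycle κ)
    {l l' : List X} (h : l.Perm l') (μ : Measure X) :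
    kappaList κ l μ = kappaList κ l' μ := by
  induction h generalizing μ with
  | nil => rfl
  | cons x _ ih => simp only [kappaList, ih, diracSum_perm ‹_›]
  | swap x y l =>
      simp only [kappaList, diracSum]
      simp only [List.map_cons, List.sum_cons]
      have := hcoc y x (μ + (l.map fun x => Measure.dirac x).sum)
      rw [show μ + (Measure.dirac y + (l.map fun x => Measure.dirac x).sum)
          = (μ + (l.map fun x => Measure.dirac x).sum) + Measure.dirac y by abel,
        show μ + (Measure.dirac x + (l.map fun x => Measure.dirac x).sum)
          = (μ + (l.map fun x => Measure.dirac x).sum) + Measure.dirac x by abel]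
      rw [← mul_assoc, ← mul_assoc]
      congr 1
      rw [mul_comm] at this ⊢
      rw [this, mul_comm]
  | trans _ _ ih1 ih2 => rw [ih1, ih2]

lemma kappaFin_succ {κ : X → Measure X → ℝ≥0∞} {m : ℕ} (v : Fin (m + 1) → X) (μ : Measure X) :
    kappaFin κ v μ = κ (v 0) (μ + diracSumFin (Fin.tail v)) * kappaFin κ (Fin.tail v) μ := by
  unfold kappaFin
  rw [List.ofFn_succ]
  simp only [kappaList, diracSum_ofFn]
  rfl

lemma kappaFin_zero {κ : X → Measure X → ℝ≥0∞} (v : Fin 0 → X) (μ : Measure X) :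
    kappaFin κ v μ = 1 := by
  unfold kappaFin
  rw [List.ofFn_zero]
  rfl

lemma ofFn_comp_perm {m : ℕ} (v : Fin m → X) (σ : Equiv.Perm (Fin m)) :
    (List.ofFn (v ∘ σ)).Perm (List.ofFn v) := by
  rw [List.ofFn_eq_map, List.ofFn_eq_map, ← List.map_map]
  exact List.Perm.map v (Equiv.Perm.map_finRange_perm σ)

lemma kappaFin_comp_perm {κ : X → Measure X → ℝ≥0∞} (hcoc : Cocycle κ) {m : ℕ}
    (v : Fin m → X) (σ : Equiv.Perm (Fin m)) (μ : Measure X) :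
    kappaFin κ (v ∘ σ) μ = kappaFin κ v μ :=
  kappaList_perm hcoc (ofFn_comp_perm v σ) μ

lemma diracSumFin_comp_perm {m : ℕ} (v : Fin m → X) (σ : Equiv.Perm (Fin m)) :
    diracSumFin (v ∘ σ) = diracSumFin v := by
  unfold diracSumFin
  exact Fintype.sum_equiv σ _ _ fun i => rfl

lemma diracSumFin_cons {m : ℕ} (x : X) (w : Fin m → X) :
    diracSumFin (Fin.cons x w) = Measure.dirac x + diracSumFin w := by
  unfold diracSumFin
  rw [Fin.sum_univ_succ]
  simp [Fin.cons_zero, Fin.cons_succ]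

lemma diracSumFin_nil (v : Fin 0 → X) : diracSumFin v = 0 := by
  unfold diracSumFin
  simp

lemma diracSumFin_univ {m : ℕ} (v : Fin m → X) : diracSumFin v Set.univ = m := by
  unfold diracSumFin
  rw [Measure.finset_sum_apply]
  simp

lemma measurable_diracSumFin {m : ℕ} : Measurable (diracSumFin (X := X) (m := m)) := by
  apply Measure.measurable_measure.2
  intro s hs
  simp only [diracSumFin, Measure.finset_sum_apply, Measure.dirac_apply' _ hs]
  exact Finset.measurable_sum _ fun i _ =>
    (measurable_const.indicator hs).comp (measurable_pi_apply i)

lemma measurable_addMeasure : Measurable fun p : Measure X × Measure X => p.1 + p.2 := by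
  apply Measure.measurable_measure.2
  intro s hs
  simp only [Measure.add_apply]
  exact ((Measure.measurable_coe hs).comp measurable_fst).add
    ((Measure.measurable_coe hs).comp measurable_snd)

lemma measurable_addDirac : Measurable fun p : Measure X × X => p.1 + Measure.dirac p.2 := by
  apply Measure.measurable_measure.2
  intro s hs
  simp only [Measure.add_apply, Measure.dirac_apply' _ hs]
  exact ((Measure.measurable_coe hs).comp measurable_fst).add
    ((measurable_const.indicator hs).comp measurable_snd)

lemma measurable_tail {m : ℕ} : Measurable (Fin.tail : (Fin (m+1) → X) → (Fin m → X)) :=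
  measurable_pi_iff.2 fun i => measurable_pi_apply _

lemma measurable_kappaFin {κ : X → Measure X → ℝ≥0∞}
    (hκmeas : Measurable fun p : X × Measure X => κ p.1 p.2) (ψ : Measure X) :
    ∀ m : ℕ, Measurable fun v : Fin m → X => kappaFin κ v ψ := by
  intro m
  induction m with
  | zero =>
      simp only [kappaFin_zero]
      exact measurable_const
  | succ m ih =>
      simp only [kappaFin_succ]
      apply Measurable.mul
      · have h1 : Measurable fun v : Fin (m+1) → X => ψ + diracSumFin (Fin.tail v) :=
          measurable_addMeasure.comp
            (measurable_const.prodMk ((measurable_diracSumFin).comp measurable_tail))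
        exact hκmeas.comp ((measurable_pi_apply 0).prodMk h1)
      · exact ih.comp measurable_tail

lemma lint_map_wd {α : Type*} [MeasurableSpace α] (ν : Measure α) (ρ : α → ℝ≥0∞)
    (hρ : Measurable ρ) (D : α → Measure X) (hD : Measurable D)
    (G : Measure X → ℝ≥0∞) (hG : Measurable G) :
    ∫⁻ μ, G μ ∂(Measure.map D (ν.withDensity ρ)) = ∫⁻ v, G (D v) * ρ v ∂ν := by
  rw [lintegral_map hG hD]
  have : ∫⁻ a, G (D a) ∂ν.withDensity ρ = ∫⁻ a, (G ∘ D) a ∂ν.withDensity ρ := rfl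
  rw [this, lintegral_withDensity_eq_lintegral_mul ν hρ (hG.comp hD)]
  congr 1
  ext v
  exact mul_comm _ _

lemma meas_apply_eq_lint {α : Type*} [MeasurableSpace α] (ν : Measure α)
    (A : Set α) (hA : MeasurableSet A) :
    ν A = ∫⁻ a, Set.indicator A (fun _ => (1:ℝ≥0∞)) a ∂ν :=
  (lintegral_indicator_one hA).symm

lemma piCongrLeft_apply_const {m : ℕ} (σ : Equiv.Perm (Fin m)) (v : Fin m → X) :
    (MeasurableEquiv.piCongrLeft (fun _ : Fin m => X) σ) v = v ∘ σ.symm := by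
  funext j
  show (Equiv.piCongrLeft (fun _ : Fin m => X) σ) v j = v (σ.symm j)
  conv_lhs => rw [← Equiv.apply_symm_apply σ j]
  exact Equiv.piCongrLeft_apply_apply (fun _ : Fin m => X) σ v (σ.symm j)

lemma lintegral_pi_comp_perm {m : ℕ} (ν : Measure X) [SigmaFinite ν]
    (σ : Equiv.Perm (Fin m)) (g : (Fin m → X) → ℝ≥0∞) (hg : Measurable g) :
    ∫⁻ v, g (v ∘ σ) ∂(Measure.pi fun _ : Fin m => ν)
      = ∫⁻ v, g v ∂(Measure.pi fun _ : Fin m => ν) := by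
  have h := measurePreserving_piCongrLeft (fun _ : Fin m => ν) σ.symm
  have := h.lintegral_comp hg
  rw [← this]
  congr 1
  funext v
  rw [piCongrLeft_apply_const]
  simp

lemma lintegral_pi_split {m : ℕ} (ν : Measure X) [IsFiniteMeasure ν]
    (g : (Fin (m+1) → X) → ℝ≥0∞) (hg : Measurable g) :
    ∫⁻ v, g v ∂(Measure.pi fun _ : Fin (m+1) => ν)
      = ∫⁻ x, ∫⁻ w, g (Fin.cons x w) ∂(Measure.pi fun _ : Fin m => ν) ∂ν := by
  have h := (measurePreserving_piFinSuccAbove (fun _ : Fin (m+1) => ν) 0).symm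
  have hsymm : ∀ p : X × (Fin m → X),
      (MeasurableEquiv.piFinSuccAbove (fun _ : Fin (m+1) => X) 0).symm p = Fin.cons p.1 p.2 := by
    intro p
    funext i
    cases i using Fin.cases with
    | zero => simp [MeasurableEquiv.piFinSuccAbove]
    | succ i => simp [MeasurableEquiv.piFinSuccAbove, Fin.insertNthEquiv]
  rw [← h.lintegral_comp hg]
  have : ∀ p : X × (Fin m → X),
      g ((MeasurableEquiv.piFinSuccAbove (fun _ : Fin (m+1) => X) 0).symm p)
        = g (Fin.cons p.1 p.2) := fun p => by rw [hsymm]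
  simp only [this]
  rw [lintegral_prod]
  exact (hg.comp (by
    apply measurable_pi_iff.2
    intro i
    cases i using Fin.cases with
    | zero => simpa using measurable_fst
    | succ i => exact (measurable_pi_apply i).comp measurable_snd)).aemeasurable

def Mf (X : Type*) [MeasurableSpace X] : Set (Measure X) := {μ : Measure X | μ Set.univ ≠ ⊤}

lemma measurableSet_Mf : MeasurableSet (Mf X) :=
  (Measure.measurable_coe MeasurableSet.univ) (measurableSet_singleton ⊤) |>.compl

lemma measurable_sec_meas {S : Set (X × Measure X)} (hS : MeasurableSet S) :
    Measurable fun μ : Measure X =>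
      Set.indicator (Mf X) (fun μ => μ {x | (x, μ) ∈ S}) μ := by
  refine MeasurableSpace.induction_on_inter
    (C := fun S _ => Measurable fun μ : Measure X =>
      Set.indicator (Mf X) (fun μ => μ {x | (x, μ) ∈ S}) μ)
    generateFrom_prod.symm isPiSystem_prod ?_ ?_ ?_ ?_ _ hS
  case _ =>
      have : ∀ μ : Measure X, Set.indicator (Mf X)
          (fun μ : Measure X => μ {x | (x, μ) ∈ (∅ : Set (X × Measure X))}) μ = 0 := by
        intro μ
        by_cases h : μ ∈ Mf X <;> simp [h, Set.indicator_apply]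
      simp only [this]; exact measurable_const
  case _ =>
      rintro t ht
      obtain ⟨s, hs, t', ht', rfl⟩ := ht
      have : ∀ μ : Measure X, Set.indicator (Mf X)
          (fun μ : Measure X => μ {x | (x, μ) ∈ s ×ˢ t'}) μ
          = Set.indicator (Mf X) (fun μ => μ s) μ * Set.indicator t' (fun _ => 1) μ := by
        intro μ
        by_cases h1 : μ ∈ Mf X
        · by_cases h2 : μ ∈ t'
          · rw [Set.indicator_of_mem h1, Set.indicator_of_mem h1, Set.indicator_of_mem h2,
              mul_one]
            have : {x | (x, μ) ∈ s ×ˢ t'} = s := by ext x; simp [h2]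
            rw [this]
          · rw [Set.indicator_of_mem h1, Set.indicator_of_mem h1,
              Set.indicator_of_notMem h2, mul_zero]
            have : {x | (x, μ) ∈ s ×ˢ t'} = (∅ : Set X) := by ext x; simp [h2]
            rw [this]; simp
        · rw [Set.indicator_of_notMem h1, Set.indicator_of_notMem h1, zero_mul]
      simp only [this]
      exact ((Measure.measurable_coe hs).indicator measurableSet_Mf).mul
        (measurable_const.indicator ht')
  case _ =>
      rintro S hSm ih
      have : ∀ μ : Measure X, Set.indicator (Mf X)
          (fun μ : Measure X => μ {x | (x, μ) ∈ Sᶜ}) μ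
          = Set.indicator (Mf X) (fun μ => μ Set.univ) μ
            - Set.indicator (Mf X) (fun μ => μ {x | (x, μ) ∈ S}) μ := by
        intro μ
        by_cases h1 : μ ∈ Mf X
        · simp only [Set.indicator_of_mem h1]
          have hsec : MeasurableSet {x | (x, μ) ∈ S} :=
            (measurable_prodMk_right (y := μ)) hSm
          have : {x | (x, μ) ∈ Sᶜ} = {x | (x, μ) ∈ S}ᶜ := rfl
          rw [this, measure_compl hsec (ne_top_of_le_ne_top h1 (measure_mono (Set.subset_univ _)))]
        · simp [Set.indicator_of_notMem h1]
      simp only [this]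
      exact ((Measure.measurable_coe MeasurableSet.univ).indicator measurableSet_Mf).sub ih
  case _ =>
      rintro g hdisj hgm ih
      have : ∀ μ : Measure X, Set.indicator (Mf X)
          (fun μ : Measure X => μ {x | (x, μ) ∈ ⋃ n, g n}) μ
          = ∑' n, Set.indicator (Mf X) (fun μ => μ {x | (x, μ) ∈ g n}) μ := by
        intro μ
        by_cases h1 : μ ∈ Mf X
        · simp only [Set.indicator_of_mem h1]
          have : {x | (x, μ) ∈ ⋃ n, g n} = ⋃ n, {x | (x, μ) ∈ g n} := by
            ext x; simp
          rw [this, measure_iUnion]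
          · intro i j hij
            exact Set.disjoint_left.2 fun x hxi hxj =>
              Set.disjoint_left.1 (hdisj hij) hxi hxj
          · exact fun n => (measurable_prodMk_right (y := μ)) (hgm n)
        · simp [Set.indicator_of_notMem h1]
      simp only [this]
      exact Measurable.ennreal_tsum ih

lemma measurable_lintegral_sec {f : X → Measure X → ℝ≥0∞}
    (hf : Measurable fun p : X × Measure X => f p.1 p.2) :
    Measurable fun μ : Measure X =>
      Set.indicator (Mf X) (fun μ => ∫⁻ x, f x μ ∂μ) μ := by
  have main : ∀ g : X × Measure X → ℝ≥0∞, Measurable g →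
      Measurable fun μ : Measure X =>
        Set.indicator (Mf X) (fun μ => ∫⁻ x, g (x, μ) ∂μ) μ := by
    intro g hg
    refine Measurable.ennreal_induction
      (motive := fun g : X × Measure X → ℝ≥0∞ => Measurable fun μ : Measure X =>
        Set.indicator (Mf X) (fun μ => ∫⁻ x, g (x, μ) ∂μ) μ) ?_ ?_ ?_ hg
    case _ =>
        rintro c S hSm
        have : ∀ μ : Measure X,
            Set.indicator (Mf X) (fun μ => ∫⁻ x, Set.indicator S (fun _ => c) (x, μ) ∂μ) μ
            = c * Set.indicator (Mf X) (fun μ => μ {x | (x, μ) ∈ S}) μ := by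
          intro μ
          have hsec : MeasurableSet {x | (x, μ) ∈ S} :=
            (measurable_prodMk_right (y := μ)) hSm
          have h2 : (fun x => Set.indicator S (fun _ => c) (x, μ))
              = Set.indicator {x | (x, μ) ∈ S} (fun _ => c) := by
            funext x
            by_cases hx : (x, μ) ∈ S
            · rw [Set.indicator_of_mem hx]
              exact (Set.indicator_of_mem (show x ∈ {x | (x, μ) ∈ S} from hx)
                (fun _ => c)).symm
            · rw [Set.indicator_of_notMem hx]
              exact (Set.indicator_of_notMem (show x ∉ {x | (x, μ) ∈ S} from hx)
                (fun _ => c)).symm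
          by_cases h1 : μ ∈ Mf X
          · simp only [Set.indicator_of_mem h1, h2]
            rw [lintegral_indicator_const hsec]
          · simp [Set.indicator_of_notMem h1]
        simp only [this]
        exact (measurable_sec_meas hSm).const_mul c
    case _ =>
        rintro g1 g2 _ hg1 hg2 ih1 ih2
        have : ∀ μ : Measure X,
            Set.indicator (Mf X) (fun μ => ∫⁻ x, (g1 + g2) (x, μ) ∂μ) μ
            = Set.indicator (Mf X) (fun μ => ∫⁻ x, g1 (x, μ) ∂μ) μ
              + Set.indicator (Mf X) (fun μ => ∫⁻ x, g2 (x, μ) ∂μ) μ := by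
          intro μ
          by_cases h1 : μ ∈ Mf X
          · simp only [Set.indicator_of_mem h1, Pi.add_apply]
            have hm1 : Measurable fun x => g1 (x, μ) :=
              hg1.comp (measurable_prodMk_right (y := μ))
            rw [lintegral_add_left hm1]
          · simp [Set.indicator_of_notMem h1]
        simp only [this]
        exact ih1.add ih2
    case _ =>
        rintro g hgm hmono ih
        have : ∀ μ : Measure X,
            Set.indicator (Mf X) (fun μ => ∫⁻ x, ⨆ n, g n (x, μ) ∂μ) μ
            = ⨆ n, Set.indicator (Mf X) (fun μ => ∫⁻ x, g n (x, μ) ∂μ) μ := by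
          intro μ
          by_cases h1 : μ ∈ Mf X
          · simp only [Set.indicator_of_mem h1]
            have hm : ∀ n, Measurable fun x => g n (x, μ) := fun n =>
              (hgm n).comp (measurable_prodMk_right (y := μ))
            rw [lintegral_iSup hm (fun i j hij x => hmono hij (x, μ))]
          · simp [Set.indicator_of_notMem h1]
        simp only [this]
        exact Measurable.iSup ih
  exact main (fun p => f p.1 p.2) hf

end Aux

theorem finite_Gibbs_process_via_kappa
    {Ω : Type*} [MeasurableSpace Ω] (P : Measure Ω) [IsProbabilityMeasure P]
    (lam : Measure X)
    (κ : X → Measure X → ℝ≥0∞)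
    (hκmeas : Measurable fun p : X × Measure X => κ p.1 p.2)
    (hκfin : ∀ (x : X) (μ : Measure X), κ x μ ≠ ⊤)
    (hcoc : Cocycle κ)
    (C : Set X) (hC : MeasurableSet C) (hlamC : lam C < ⊤)
    (ψ : Measure X) (hZ : partitionZ κ lam C ψ < ⊤)
    (ξ : Ω → Measure X) (hξmeas : Measurable ξ)
    (hdist : ∀ A : Set (Measure X), MeasurableSet A →
      P {ω | ξ ω ∈ A}
        = (partitionZ κ lam C ψ)⁻¹ *
          (Set.indicator A (fun _ => (1 : ℝ≥0∞)) (0 : Measure X)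
            + ∑' m : ℕ, (((m + 1).factorial : ℝ≥0∞))⁻¹ *
                ∫⁻ v : Fin (m + 1) → X,
                  Set.indicator A (fun _ => (1 : ℝ≥0∞)) (diracSumFin v) * kappaFin κ v ψ
                ∂(Measure.pi fun _ : Fin (m + 1) => lam.restrict C))) :
    (∀ f : X → Measure X → ℝ≥0∞,
      Measurable (fun p : X × Measure X => f p.1 p.2) →
      ∫⁻ ω, ∫⁻ x, f x (ξ ω) ∂(ξ ω) ∂P
        = ∫⁻ ω, ∫⁻ x, f x (ξ ω + Measure.dirac x) * kernelRestrict κ C ψ x (ξ ω) ∂lam ∂P) ∧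
    (∀ᵐ ω ∂P, ξ ω Set.univ < ⊤ ∧ ξ ω Cᶜ = 0) := by
  classical
  set ν : Measure X := lam.restrict C with hν
  haveI hfinν : IsFiniteMeasure ν := ⟨by rw [hν, Measure.restrict_apply_univ]; exact hlamC⟩
  set Z : ℝ≥0∞ := partitionZ κ lam C ψ with hZdef
  -- the measurable density
  have hρmeas : ∀ m : ℕ, Measurable fun v : Fin m → X => kappaFin κ v ψ :=
    measurable_kappaFin hκmeas ψ
  -- ** Expansion of integrals of functionals of ξ **
  have expand : ∀ G : Measure X → ℝ≥0∞, Measurable G →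
      ∫⁻ ω, G (ξ ω) ∂P = Z⁻¹ *
        (G 0 + ∑' m : ℕ, (((m + 1).factorial : ℝ≥0∞))⁻¹ *
          ∫⁻ v : Fin (m + 1) → X, G (diracSumFin v) * kappaFin κ v ψ
            ∂(Measure.pi fun _ : Fin (m + 1) => ν)) := by
    intro G hG
    set Q : Measure (Measure X) := Z⁻¹ • (Measure.dirac (0 : Measure X)
      + Measure.sum fun m : ℕ => (((m + 1).factorial : ℝ≥0∞))⁻¹ •
          Measure.map diracSumFin
            ((Measure.pi fun _ : Fin (m + 1) => ν).withDensity
              fun v => kappaFin κ v ψ)) with hQ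
    have hmap : Measure.map ξ P = Q := by
      ext A hA
      rw [Measure.map_apply hξmeas hA]
      rw [show ξ ⁻¹' A = {ω | ξ ω ∈ A} from rfl, hdist A hA]
      rw [hQ, Measure.smul_apply, smul_eq_mul, Measure.add_apply,
        Measure.sum_apply _ hA]
      congr 1
      congr 1
      · rw [Measure.dirac_apply' _ hA]
        rfl
      · refine tsum_congr fun m => ?_
        rw [Measure.smul_apply, smul_eq_mul]
        congr 1
        rw [meas_apply_eq_lint _ A hA,
          lint_map_wd _ _ (hρmeas (m + 1)) _ measurable_diracSumFin _
            (measurable_const.indicator hA)]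
    calc ∫⁻ ω, G (ξ ω) ∂P = ∫⁻ μ, G μ ∂(Measure.map ξ P) := (lintegral_map hG hξmeas).symm
      _ = ∫⁻ μ, G μ ∂Q := by rw [hmap]
      _ = Z⁻¹ * (G 0 + ∑' m : ℕ, (((m + 1).factorial : ℝ≥0∞))⁻¹ *
            ∫⁻ v : Fin (m + 1) → X, G (diracSumFin v) * kappaFin κ v ψ
              ∂(Measure.pi fun _ : Fin (m + 1) => ν)) := by
          rw [hQ, lintegral_smul_measure, lintegral_add_measure, lintegral_dirac' _ hG,
            lintegral_sum_measure]
          congr 2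
          refine tsum_congr fun m => ?_
          rw [lintegral_smul_measure]
          congr 1
          exact lint_map_wd _ _ (hρmeas (m + 1)) _ measurable_diracSumFin _ hG
  -- ** Part 2 : a.s. finiteness and support **
  have hνCc : ν Cᶜ = 0 := by
    rw [hν, Measure.restrict_apply hC.compl]
    simp
  have haeC : ∀ m : ℕ, ∀ᵐ v ∂(Measure.pi fun _ : Fin m => ν), ∀ i, v i ∈ C := by
    intro m
    rw [ae_all_iff]
    intro i
    have : (Measure.pi fun _ : Fin m => ν) (Function.eval i ⁻¹' Cᶜ) = 0 :=
      Measure.pi_eval_preimage_null (μ := fun _ : Fin m => ν) (i := i) hνCc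
    rw [ae_iff]
    convert this using 2
    rfl
  have part2 : ∀ᵐ ω ∂P, ξ ω Set.univ < ⊤ ∧ ξ ω Cᶜ = 0 := by
    set A : Set (Measure X) := {μ : Measure X | ¬(μ Set.univ < ⊤ ∧ μ Cᶜ = 0)} with hA
    have hAmeas : MeasurableSet A := by
      have h1 : MeasurableSet {μ : Measure X | μ Set.univ < ⊤} := by
        have : {μ : Measure X | μ Set.univ < ⊤}
            = (fun μ : Measure X => μ Set.univ) ⁻¹' {⊤}ᶜ := by
          ext μ; simp [lt_top_iff_ne_top]
        rw [this]
        exact (Measure.measurable_coe MeasurableSet.univ) (measurableSet_singleton ⊤).compl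
      have h2 : MeasurableSet {μ : Measure X | μ Cᶜ = 0} :=
        (Measure.measurable_coe hC.compl) (measurableSet_singleton 0)
      exact ((h1.inter h2).compl)
    have hzero : P {ω | ξ ω ∈ A} = 0 := by
      rw [hdist A hAmeas]
      have h0 : Set.indicator A (fun _ => (1 : ℝ≥0∞)) (0 : Measure X) = 0 := by
        apply Set.indicator_of_notMem
        exact fun hmem => hmem ⟨by simp, by simp⟩
      have hterm : ∀ m : ℕ,
          ∫⁻ v : Fin (m + 1) → X,
            Set.indicator A (fun _ => (1 : ℝ≥0∞)) (diracSumFin v) * kappaFin κ v ψ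
          ∂(Measure.pi fun _ : Fin (m + 1) => ν) = 0 := by
        intro m
        rw [← lintegral_zero (μ := Measure.pi fun _ : Fin (m + 1) => ν)]
        apply lintegral_congr_ae
        filter_upwards [haeC (m + 1)] with v hv
        have hmem : diracSumFin v ∉ A := by
          simp only [hA, Set.mem_setOf_eq, not_not]
          constructor
          · rw [diracSumFin_univ]; exact natCast_lt_top _
          · unfold diracSumFin
            rw [Measure.finset_sum_apply]
            refine Finset.sum_eq_zero fun i _ => ?_
            rw [Measure.dirac_apply' _ hC.compl]
            exact Set.indicator_of_notMem (by simpa using hv i) _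
        rw [Set.indicator_of_notMem hmem, zero_mul]
      rw [h0, zero_add]
      have : ∑' m : ℕ, (((m + 1).factorial : ℝ≥0∞))⁻¹ *
          ∫⁻ v : Fin (m + 1) → X,
            Set.indicator A (fun _ => (1 : ℝ≥0∞)) (diracSumFin v) * kappaFin κ v ψ
          ∂(Measure.pi fun _ : Fin (m + 1) => ν) = 0 := by
        rw [ENNReal.tsum_eq_zero]
        intro m
        rw [hterm m, mul_zero]
      rw [this, mul_zero]
    rw [ae_iff]
    exact hzero
  refine ⟨?_, part2⟩
  -- ** Part 1 : GNZ equations **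
  intro f hf
  -- the right-hand functional
  set GR : Measure X → ℝ≥0∞ := fun μ =>
    ∫⁻ x, f x (μ + Measure.dirac x) * kernelRestrict κ C ψ x μ ∂lam with hGRdef
  have hGRalt : ∀ μ : Measure X,
      GR μ = ∫⁻ x, f x (μ + Measure.dirac x) * κ x (ψ + μ) ∂ν := by
    intro μ
    show ∫⁻ x, f x (μ + Measure.dirac x) * kernelRestrict κ C ψ x μ ∂lam
      = ∫⁻ x, f x (μ + Measure.dirac x) * κ x (ψ + μ) ∂ν
    have : (fun x => f x (μ + Measure.dirac x) * kernelRestrict κ C ψ x μ)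
        = Set.indicator C (fun x => f x (μ + Measure.dirac x) * κ x (ψ + μ)) := by
      funext x
      unfold kernelRestrict
      by_cases hx : x ∈ C
      · rw [Set.indicator_of_mem hx, Set.indicator_of_mem hx, mul_one]
      · rw [Set.indicator_of_notMem hx, Set.indicator_of_notMem hx, mul_zero, mul_zero]
    rw [this, lintegral_indicator hC]
  have hGRmeas : Measurable GR := by
    have hfun : GR = fun μ => ∫⁻ x, f x (μ + Measure.dirac x) * κ x (ψ + μ) ∂ν :=
      funext hGRalt
    rw [hfun]
    apply Measurable.lintegral_prod_right'
      (f := fun p : Measure X × X => f p.2 (p.1 + Measure.dirac p.2) * κ p.2 (ψ + p.1))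
    exact (hf.comp (measurable_snd.prodMk measurable_addDirac)).mul
      (hκmeas.comp (measurable_snd.prodMk
        (measurable_addMeasure.comp (measurable_const.prodMk measurable_fst))))
  -- the left-hand functional (measurable version)
  set GLf : Measure X → ℝ≥0∞ := fun μ =>
    Set.indicator (Mf X) (fun μ => ∫⁻ x, f x μ ∂μ) μ with hGLfdef
  have hGLfmeas : Measurable GLf := measurable_lintegral_sec hf
  have hLHS : ∫⁻ ω, ∫⁻ x, f x (ξ ω) ∂(ξ ω) ∂P = ∫⁻ ω, GLf (ξ ω) ∂P := by
    apply lintegral_congr_ae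
    filter_upwards [part2] with ω hω
    simp only [hGLfdef]
    rw [Set.indicator_of_mem (show ξ ω ∈ Mf X from lt_top_iff_ne_top.1 hω.1)]
  -- values of GLf on relevant measures
  have hGLf0 : GLf 0 = 0 := by
    simp only [hGLfdef]
    rw [Set.indicator_of_mem (show (0 : Measure X) ∈ Mf X by simp [Mf])]
    simp
  have hGLfD : ∀ m : ℕ, ∀ v : Fin m → X,
      GLf (diracSumFin v) = ∑ j, f (v j) (diracSumFin v) := by
    intro m v
    simp only [hGLfdef]
    rw [Set.indicator_of_mem (show diracSumFin v ∈ Mf X from by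
      show diracSumFin v Set.univ ≠ ⊤
      rw [diracSumFin_univ]; exact natCast_ne_top m)]
    unfold diracSumFin
    rw [lintegral_finset_sum_measure]
    refine Finset.sum_congr rfl fun j _ => ?_
    exact lintegral_dirac' _ (hf.comp (measurable_id.prodMk measurable_const))
  -- the key term computation
  have key : ∀ m : ℕ,
      ∫⁻ v : Fin (m + 1) → X, GLf (diracSumFin v) * kappaFin κ v ψ
        ∂(Measure.pi fun _ : Fin (m + 1) => ν)
      = (m + 1 : ℕ) * ∫⁻ w : Fin m → X, GR (diracSumFin w) * kappaFin κ w ψ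
          ∂(Measure.pi fun _ : Fin m => ν) := by
    intro m
    -- measurability of the basic integrand pieces
    have hbase : ∀ (j : Fin (m + 1)), Measurable fun v : Fin (m+1) → X =>
        f (v j) (diracSumFin v) * kappaFin κ v ψ := fun j =>
      (hf.comp ((measurable_pi_apply j).prodMk measurable_diracSumFin)).mul (hρmeas (m+1))
    have step1 : ∫⁻ v : Fin (m + 1) → X, GLf (diracSumFin v) * kappaFin κ v ψ
          ∂(Measure.pi fun _ : Fin (m + 1) => ν)
        = ∑ j : Fin (m + 1), ∫⁻ v : Fin (m + 1) → X,
            f (v j) (diracSumFin v) * kappaFin κ v ψ ∂(Measure.pi fun _ : Fin (m + 1) => ν) := by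
      have : ∀ v : Fin (m+1) → X, GLf (diracSumFin v) * kappaFin κ v ψ
          = ∑ j : Fin (m+1), f (v j) (diracSumFin v) * kappaFin κ v ψ := by
        intro v
        rw [hGLfD (m+1) v, Finset.sum_mul]
      simp only [this]
      exact lintegral_finset_sum _ fun j _ => hbase j
    have step2 : ∀ j : Fin (m + 1),
        ∫⁻ v : Fin (m + 1) → X, f (v j) (diracSumFin v) * kappaFin κ v ψ
          ∂(Measure.pi fun _ : Fin (m + 1) => ν)
        = ∫⁻ v : Fin (m + 1) → X, f (v 0) (diracSumFin v) * kappaFin κ v ψ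
          ∂(Measure.pi fun _ : Fin (m + 1) => ν) := by
      intro j
      set σ : Equiv.Perm (Fin (m+1)) := Equiv.swap 0 j with hσ
      have := lintegral_pi_comp_perm (m := m+1) ν σ _ (hbase j)
      rw [← this]
      apply lintegral_congr
      intro v
      have h1 : (v ∘ σ) j = v 0 := by
        simp only [Function.comp_apply, hσ, Equiv.swap_apply_right]
      rw [h1, diracSumFin_comp_perm v σ, kappaFin_comp_perm hcoc v σ]
    have step3 : ∫⁻ v : Fin (m + 1) → X, f (v 0) (diracSumFin v) * kappaFin κ v ψ
          ∂(Measure.pi fun _ : Fin (m + 1) => ν)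
        = ∫⁻ w : Fin m → X, GR (diracSumFin w) * kappaFin κ w ψ
            ∂(Measure.pi fun _ : Fin m => ν) := by
      rw [lintegral_pi_split ν _ (hbase 0)]
      have inner : ∀ x : X, ∀ w : Fin m → X,
          f ((Fin.cons x w : Fin (m+1) → X) 0) (diracSumFin (Fin.cons x w))
              * kappaFin κ (Fin.cons x w) ψ
          = f x (diracSumFin w + Measure.dirac x) * κ x (ψ + diracSumFin w)
              * kappaFin κ w ψ := by
        intro x w
        rw [Fin.cons_zero, diracSumFin_cons, kappaFin_succ (Fin.cons x w) ψ, Fin.cons_zero,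
          Fin.tail_cons, add_comm (Measure.dirac x) (diracSumFin w), ← mul_assoc]
      simp only [inner]
      rw [lintegral_lintegral_swap]
      · apply lintegral_congr
        intro w
        rw [hGRalt]
        have hm : Measurable fun x =>
            f x (diracSumFin w + Measure.dirac x) * κ x (ψ + diracSumFin w) :=
          (hf.comp (measurable_id.prodMk
            (measurable_addDirac.comp (measurable_const.prodMk measurable_id)))).mul
            (hκmeas.comp (measurable_id.prodMk measurable_const))
        rw [← lintegral_mul_const _ hm]
      · apply Measurable.aemeasurable
        apply Measurable.mul
        · apply Measurable.mul
          · exact hf.comp (measurable_fst.prodMk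
              (measurable_addDirac.comp ((measurable_diracSumFin.comp measurable_snd).prodMk
                measurable_fst)))
          · exact hκmeas.comp (measurable_fst.prodMk
              (measurable_addMeasure.comp (measurable_const.prodMk
                (measurable_diracSumFin.comp measurable_snd))))
        · exact (hρmeas m).comp measurable_snd
    rw [step1]
    rw [Finset.sum_congr rfl fun j _ => step2 j]
    rw [Finset.sum_const, Finset.card_univ, Fintype.card_fin, nsmul_eq_mul, step3]
  -- coefficient bookkeeping
  have coeff : ∀ m : ℕ, (((m + 1).factorial : ℝ≥0∞))⁻¹ * ((m + 1 : ℕ) *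
      ∫⁻ w : Fin m → X, GR (diracSumFin w) * kappaFin κ w ψ ∂(Measure.pi fun _ : Fin m => ν))
      = ((m.factorial : ℝ≥0∞))⁻¹ *
        ∫⁻ w : Fin m → X, GR (diracSumFin w) * kappaFin κ w ψ
          ∂(Measure.pi fun _ : Fin m => ν) := by
    intro m
    have h1 : ((m + 1).factorial : ℝ≥0∞) = ((m + 1 : ℕ) : ℝ≥0∞) * (m.factorial : ℝ≥0∞) := by
      rw [Nat.factorial_succ]
      push_cast
      ring
    rw [h1, ENNReal.mul_inv (Or.inl (Nat.cast_ne_zero.2 (Nat.succ_ne_zero m)))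
      (Or.inl (natCast_ne_top _)), ← mul_assoc, mul_assoc _ _ ((m + 1 : ℕ) : ℝ≥0∞),
      mul_comm (((m.factorial : ℝ≥0∞))⁻¹) ((m + 1 : ℕ) : ℝ≥0∞), ← mul_assoc, mul_assoc]
    rw [ENNReal.inv_mul_cancel (Nat.cast_ne_zero.2 (Nat.succ_ne_zero m)) (natCast_ne_top _),
      one_mul]
  -- J 0 = GR 0
  have hJ0 : ∫⁻ w : Fin 0 → X, GR (diracSumFin w) * kappaFin κ w ψ
      ∂(Measure.pi fun _ : Fin 0 => ν) = GR 0 := by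
    rw [Measure.pi_of_empty (fun _ : Fin 0 => ν)]
    have hm : Measurable fun w : Fin 0 → X => GR (diracSumFin w) * kappaFin κ w ψ :=
      (hGRmeas.comp measurable_diracSumFin).mul (hρmeas 0)
    rw [lintegral_dirac' _ hm]
    rw [diracSumFin_nil, kappaFin_zero, mul_one]
  -- put it together
  rw [hLHS, expand GLf hGLfmeas]
  have hRHS : ∫⁻ ω, ∫⁻ x, f x (ξ ω + Measure.dirac x) * kernelRestrict κ C ψ x (ξ ω) ∂lam ∂P
      = ∫⁻ ω, GR (ξ ω) ∂P := rfl
  rw [hRHS, expand GR hGRmeas]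
  congr 1
  rw [hGLf0, zero_add]
  have shift : ∑' m : ℕ, ((m.factorial : ℝ≥0∞))⁻¹ *
      ∫⁻ w : Fin m → X, GR (diracSumFin w) * kappaFin κ w ψ ∂(Measure.pi fun _ : Fin m => ν)
      = GR 0 + ∑' m : ℕ, (((m + 1).factorial : ℝ≥0∞))⁻¹ *
        ∫⁻ v : Fin (m + 1) → X, GR (diracSumFin v) * kappaFin κ v ψ
          ∂(Measure.pi fun _ : Fin (m + 1) => ν) := by
    rw [tsum_eq_zero_add' ENNReal.summable]
    congr 1
    rw [hJ0]
    simp [Nat.factorial]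
  rw [← shift]
  refine tsum_congr fun m => ?_
  rw [key m, coeff m]

end Gibbs
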